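/- Let c > 0 and φ_c(s) := √c · tanh(√c · s/√2). There exists λ₀ > 0 such that for every continuously differentiable z : ℝ → ℝ with z and z' square integrable on ℝ and satisfying the orthogonality condition ∫_ℝ z(x)·φ_c'(x) dx = 0, one has (1/2)·∫_ℝ (z'(x)² + 2c·z(x)² − 3·(c − φ_c(x)²)·z(x)²) dx ≥ λ₀·∫_ℝ (z'(x)² + z(x)²) dx. -/

import Mathlib

open Real MeasureTheory Set Filter Topology

/-- The mKdV kink profile `φ_c(s) = √c · tanh(√c · s / √2)`. -/
noncomputable def kink (c : ℝ) (s : ℝ) : ℝ :=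
  Real.sqrt c * Real.tanh (Real.sqrt c * s / Real.sqrt 2)

/-! ### Elementary facts about `tanh` and `cosh` -/

lemma my_hasDerivAt_tanh (y : ℝ) : HasDerivAt Real.tanh ((1 / Real.cosh y) ^ 2) y := by
  have h := (Real.hasDerivAt_sinh y).div (Real.hasDerivAt_cosh y) (ne_of_gt (Real.cosh_pos y))
  have hfun : (fun x => Real.sinh x / Real.cosh x) = Real.tanh := by
    funext x; rw [Real.tanh_eq_sinh_div_cosh]
  rw [show (Real.sinh / Real.cosh) = (fun x => Real.sinh x / Real.cosh x) from rfl, hfun] at h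
  refine h.congr_deriv ?_
  have hc := Real.cosh_pos y
  have hi := Real.cosh_sq_sub_sinh_sq y
  field_simp
  nlinarith [hi]

lemma my_one_sub_tanh_sq (y : ℝ) : 1 - Real.tanh y ^ 2 = (1 / Real.cosh y) ^ 2 := by
  have hc := Real.cosh_pos y
  have hi := Real.cosh_sq_sub_sinh_sq y
  rw [Real.tanh_eq_sinh_div_cosh]
  field_simp
  try nlinarith [hi]

lemma my_abs_tanh_le_one (y : ℝ) : |Real.tanh y| ≤ 1 := by
  have hc := Real.cosh_pos y
  have hi := Real.cosh_sq_sub_sinh_sq y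
  rw [Real.tanh_eq_sinh_div_cosh, abs_div, abs_of_pos hc, div_le_one hc]
  nlinarith [abs_nonneg (Real.sinh y), sq_abs (Real.sinh y), hc]

lemma my_exp_abs_le_two_cosh (y : ℝ) : Real.exp |y| ≤ 2 * Real.cosh y := by
  rw [Real.cosh_eq]
  rcases abs_cases y with ⟨h, _⟩ | ⟨h, _⟩ <;> rw [h] <;>
    nlinarith [Real.exp_pos y, Real.exp_pos (-y)]

lemma my_cosh_le_exp (y : ℝ) (hy : 0 ≤ y) : Real.cosh y ≤ Real.exp y := by
  rw [Real.cosh_eq]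
  have : Real.exp (-y) ≤ Real.exp y := Real.exp_le_exp.2 (by linarith)
  linarith

lemma my_sech_le (y : ℝ) : 1 / Real.cosh y ≤ 2 * Real.exp (-|y|) := by
  have hc := Real.cosh_pos y
  have h := my_exp_abs_le_two_cosh y
  rw [Real.exp_neg, div_le_iff₀ hc]
  have he := Real.exp_pos |y|
  have h2 : (0:ℝ) < 2 * cosh y := by linarith
  calc (1:ℝ) = Real.exp |y| * (Real.exp |y|)⁻¹ := by field_simp
  _ ≤ (2 * cosh y) * (Real.exp |y|)⁻¹ := by
      apply mul_le_mul_of_nonneg_right _ (by positivity); linarith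
  _ = 2 * (Real.exp |y|)⁻¹ * cosh y := by ring

/-! ### Integrability of `exp (-b*|x|)` -/

lemma my_integrable_exp_neg_abs {b : ℝ} (hb : 0 < b) :
    Integrable (fun x : ℝ => Real.exp (-(b * |x|))) := by
  have hIoi : IntegrableOn (fun x : ℝ => Real.exp (-(b * |x|))) (Ioi 0) := by
    refine (exp_neg_integrableOn_Ioi 0 hb).congr_fun ?_ measurableSet_Ioi
    intro x hx
    simp only [mem_Ioi] at hx
    simp only []
    rw [abs_of_pos hx, neg_mul]
  have hIic : IntegrableOn (fun x : ℝ => Real.exp (-(b * |x|))) (Iic 0) := by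
    have h1 : Integrable ((Ioi (0:ℝ)).indicator (fun x : ℝ => Real.exp (-(b * |x|)))) := by
      rwa [integrable_indicator_iff measurableSet_Ioi]
    have h2 := h1.comp_neg
    have heq : (fun t : ℝ => (Ioi (0:ℝ)).indicator (fun x : ℝ => Real.exp (-(b * |x|))) (-t))
        = (Iio (0:ℝ)).indicator (fun x : ℝ => Real.exp (-(b * |x|))) := by
      funext t
      by_cases ht : t < 0
      · rw [Set.indicator_of_mem (by simpa using ht), Set.indicator_of_mem (by simpa using ht)]
        rw [abs_neg]
      · rw [Set.indicator_of_notMem (by simpa using ht),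
          Set.indicator_of_notMem (by simpa using ht)]
    rw [heq] at h2
    rw [integrable_indicator_iff measurableSet_Iio] at h2
    exact h2.congr_set_ae (MeasureTheory.Iio_ae_eq_Iic).symm
  have := hIic.union hIoi
  rw [Iic_union_Ioi] at this
  rwa [← integrableOn_univ]

/-! ### Cauchy–Schwarz for integrals -/

lemma my_cs_integral {μ : Measure ℝ} (f g : ℝ → ℝ)
    (hf : Integrable (fun x => f x ^ 2) μ) (hg : Integrable (fun x => g x ^ 2) μ)
    (hfg : Integrable (fun x => f x * g x) μ) :
    (∫ x, f x * g x ∂μ) ^ 2 ≤ (∫ x, f x ^ 2 ∂μ) * ∫ x, g x ^ 2 ∂μ := by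
  set A := ∫ x, f x ^ 2 ∂μ
  set B := ∫ x, g x ^ 2 ∂μ
  set C := ∫ x, f x * g x ∂μ
  have key : ∀ t : ℝ, 0 ≤ A * (t * t) + (2 * C) * t + B := by
    intro t
    have h1 : ∀ x, (t * f x + g x) ^ 2 = t ^ 2 * f x ^ 2 + 2 * t * (f x * g x) + g x ^ 2 := by
      intro x; ring
    have h2 : Integrable (fun x => t ^ 2 * f x ^ 2 + 2 * t * (f x * g x)) μ :=
      (hf.const_mul _).add (hfg.const_mul _)
    have h3 : (0:ℝ) ≤ ∫ x, (t * f x + g x) ^ 2 ∂μ :=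
      integral_nonneg fun x => sq_nonneg _
    calc (0:ℝ) ≤ ∫ x, (t * f x + g x) ^ 2 ∂μ := h3
      _ = ∫ x, (t ^ 2 * f x ^ 2 + 2 * t * (f x * g x)) + g x ^ 2 ∂μ := by
          congr 1; funext x; ring
      _ = (∫ x, t ^ 2 * f x ^ 2 + 2 * t * (f x * g x) ∂μ) + B := by
          rw [integral_add h2 hg]
      _ = (t ^ 2 * A + 2 * t * C) + B := by
          rw [integral_add (hf.const_mul _) (hfg.const_mul _),
            integral_const_mul, integral_const_mul]
      _ = A * (t * t) + (2 * C) * t + B := by ring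
  have hd := discrim_le_zero key
  rw [discrim] at hd
  nlinarith [hd]

/-! ### If an integrable function tends to a limit, the limit is zero -/

lemma my_limit_zero_atTop {g : ℝ → ℝ} {L : ℝ} (hgi : Integrable g)
    (hg0 : ∀ x, 0 ≤ g x) (hL : Tendsto g atTop (𝓝 L)) : L = 0 := by
  by_contra hne
  have hL0 : 0 ≤ L := le_of_tendsto_of_tendsto' tendsto_const_nhds hL (fun x => hg0 x)
  have hLpos : 0 < L := lt_of_le_of_ne hL0 (Ne.symm hne)
  have hev : ∀ᶠ x in atTop, L / 2 ≤ g x := hL.eventually_const_le (by linarith)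
  obtain ⟨M, hM⟩ := hev.exists_forall_of_atTop
  have hconst : Integrable (fun _ : ℝ => L / 2) (volume.restrict (Ioi M)) := by
    refine Integrable.mono' (hgi.integrableOn) aestronglyMeasurable_const ?_
    refine (ae_restrict_iff' measurableSet_Ioi).2 (ae_of_all _ fun x hx => ?_)
    rw [Real.norm_eq_abs, abs_of_pos (by linarith)]
    exact hM x hx.le
  rw [integrable_const_iff] at hconst
  rcases hconst with h | h
  · exact absurd h (by positivity)
  · rw [isFiniteMeasure_restrict, Real.volume_Ioi] at h
    simp at h

lemma my_limit_zero_atBot {g : ℝ → ℝ} {L : ℝ} (hgi : Integrable g)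
    (hg0 : ∀ x, 0 ≤ g x) (hL : Tendsto g atBot (𝓝 L)) : L = 0 := by
  have := hgi.comp_neg
  refine my_limit_zero_atTop this (fun x => hg0 _) ?_
  exact hL.comp tendsto_neg_atTop_atBot

/-! ### The square of an `H¹` function tends to zero at infinity -/

lemma my_integrable_mul {f g : ℝ → ℝ} (hfc : Continuous f) (hgc : Continuous g)
    (hf : Integrable (fun x => f x ^ 2)) (hg : Integrable (fun x => g x ^ 2)) :
    Integrable (fun x => f x * g x) := by
  refine Integrable.mono' ((hf.add hg).const_mul (1/2)) ((hfc.mul hgc).aestronglyMeasurable) ?_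
  refine ae_of_all _ fun x => ?_
  rw [Real.norm_eq_abs, abs_mul]
  simp only [Pi.add_apply]
  nlinarith [abs_nonneg (f x), abs_nonneg (g x), sq_abs (f x), sq_abs (g x),
    sq_nonneg (|f x| - |g x|)]

lemma my_sq_tendsto_zero {z : ℝ → ℝ} (hz : ContDiff ℝ 1 z)
    (h2 : Integrable (fun x => z x ^ 2)) (h2' : Integrable (fun x => deriv z x ^ 2)) :
    Tendsto (fun x => z x ^ 2) atTop (𝓝 0) ∧ Tendsto (fun x => z x ^ 2) atBot (𝓝 0) := by
  have hzc : Continuous z := hz.continuous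
  have hdc : Continuous (deriv z) := hz.continuous_deriv le_rfl
  have hzd : Integrable (fun x => z x * deriv z x) := my_integrable_mul hzc hdc h2 h2'
  have hderiv : ∀ x : ℝ, HasDerivAt (fun y => z y ^ 2) (2 * (z x * deriv z x)) x := by
    intro x
    have h := ((hz.differentiable one_ne_zero).differentiableAt (x := x)).hasDerivAt
    exact (h.pow 2).congr_deriv (by rw [show (2:ℕ) - 1 = 1 from rfl, pow_one]; push_cast; ring)
  have hcont2 : Continuous (fun x => 2 * (z x * deriv z x)) := by continuity
  have hFTC : ∀ x : ℝ, ∫ t in (0:ℝ)..x, 2 * (z t * deriv z t) = z x ^ 2 - z 0 ^ 2 := by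
    intro x
    exact intervalIntegral.integral_eq_sub_of_hasDerivAt (fun t _ => hderiv t)
      (hcont2.intervalIntegrable _ _)
  constructor
  · have htend : Tendsto (fun x : ℝ => ∫ t in (0:ℝ)..x, 2 * (z t * deriv z t)) atTop
        (𝓝 (∫ t in Ioi (0:ℝ), 2 * (z t * deriv z t))) :=
      intervalIntegral_tendsto_integral_Ioi 0 ((hzd.const_mul 2).integrableOn) tendsto_id
    have h1 : Tendsto (fun x => z x ^ 2) atTop
        (𝓝 ((∫ t in Ioi (0:ℝ), 2 * (z t * deriv z t)) + z 0 ^ 2)) := by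
      have := htend.add_const (z 0 ^ 2)
      refine this.congr fun x => ?_
      rw [hFTC x]; ring
    have hL := my_limit_zero_atTop h2 (fun x => sq_nonneg _) h1
    rwa [hL] at h1
  · have htend : Tendsto (fun x : ℝ => ∫ t in x..(0:ℝ), 2 * (z t * deriv z t)) atBot
        (𝓝 (∫ t in Iic (0:ℝ), 2 * (z t * deriv z t))) :=
      intervalIntegral_tendsto_integral_Iic 0 ((hzd.const_mul 2).integrableOn) tendsto_id
    have h1 : Tendsto (fun x => z x ^ 2) atBot
        (𝓝 (z 0 ^ 2 - ∫ t in Iic (0:ℝ), 2 * (z t * deriv z t))) := by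
      have := (tendsto_const_nhds (x := z 0 ^ 2) (f := atBot)).sub htend
      refine this.congr fun x => ?_
      have h0 : (∫ t in x..(0:ℝ), 2 * (z t * deriv z t))
          = -(z x ^ 2 - z 0 ^ 2) := by
        rw [intervalIntegral.integral_symm, hFTC x]
      rw [h0]; ring
    have hL := my_limit_zero_atBot h2 (fun x => sq_nonneg _) h1
    rwa [hL] at h1

lemma my_continuous_tanh : Continuous Real.tanh := by
  have h : Real.tanh = fun x => Real.sinh x / Real.cosh x := funext Real.tanh_eq_sinh_div_cosh
  rw [h]
  exact Real.continuous_sinh.div Real.continuous_cosh fun x => (Real.cosh_pos x).ne'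

/-! ### The Hardy-type estimate on the positive ray -/

lemma my_ray (k : ℝ) (hk : 0 < k) (z : ℝ → ℝ) (hz : ContDiff ℝ 1 z)
    (hin : IntegrableOn (fun x => (z x - z 0 * (1 / Real.cosh (k*x)) ^ 2) ^ 2) (Ioi 0))
    (hu : IntegrableOn (fun x => (deriv z x + 2*k*Real.tanh (k*x) * z x) ^ 2) (Ioi 0)) :
    (∫ x in Ioi 0, (z x - z 0 * (1 / Real.cosh (k*x)) ^ 2) ^ 2)
      ≤ (16/(3*k^2)) * ∫ x in Ioi 0, (deriv z x + 2*k*Real.tanh (k*x) * z x) ^ 2 := by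
  have hzc : Continuous z := hz.continuous
  have hdc : Continuous (deriv z) := hz.continuous_deriv le_rfl
  have hlin : Continuous (fun t : ℝ => k * t) := continuous_const.mul continuous_id
  have hcch : Continuous (fun t : ℝ => Real.cosh (k*t)) := Real.continuous_cosh.comp hlin
  have hcta : Continuous (fun t : ℝ => Real.tanh (k*t)) := my_continuous_tanh.comp hlin
  set u : ℝ → ℝ := fun x => deriv z x + 2*k*Real.tanh (k*x) * z x with hu_def
  have hucont : Continuous u := hdc.add (((continuous_const.mul hcta)).mul hzc)
  have hce1 : Continuous (fun t : ℝ => Real.exp (k*t)) := Real.continuous_exp.comp hlin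
  have hce2 : Continuous (fun t : ℝ => Real.exp (k*t/2)) :=
    Real.continuous_exp.comp (hlin.div_const 2)
  have hce3 : Continuous (fun t : ℝ => Real.exp (-(k*t)/2)) :=
    Real.continuous_exp.comp (hlin.neg.div_const 2)
  have hce4 : Continuous (fun t : ℝ => Real.exp (-(k*t))) := Real.continuous_exp.comp hlin.neg
  have hce5 : Continuous (fun t : ℝ => Real.exp (3*k*t)) :=
    Real.continuous_exp.comp ((continuous_const.mul continuous_id))
  set w : ℝ → ℝ := fun x => z x * Real.cosh (k*x) ^ 2 with hw_def
  have hkx : ∀ x : ℝ, HasDerivAt (fun y : ℝ => k * y) k x := by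
    intro x; simpa using (hasDerivAt_id x).const_mul k
  have hch2 : ∀ x : ℝ, HasDerivAt (fun y => Real.cosh (k*y) ^ 2)
      (2 * Real.cosh (k*x) * (Real.sinh (k*x) * k)) x := by
    intro x
    have h1 : HasDerivAt (fun y => Real.cosh (k*y)) (Real.sinh (k*x) * k) x :=
      (Real.hasDerivAt_cosh (k*x)).comp x (hkx x)
    exact (h1.pow 2).congr_deriv (by norm_num)
  have hw' : ∀ x : ℝ, HasDerivAt w (u x * Real.cosh (k*x) ^ 2) x := by
    intro x
    have h := ((hz.differentiable one_ne_zero x).hasDerivAt).mul (hch2 x)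
    refine h.congr_deriv ?_
    have hc := Real.cosh_pos (k*x)
    rw [hu_def]
    simp only [Real.tanh_eq_sinh_div_cosh]
    field_simp
  have hwint : ∀ x : ℝ, ∫ t in (0:ℝ)..x, u t * Real.cosh (k*t) ^ 2 = w x - w 0 := by
    intro x
    refine intervalIntegral.integral_eq_sub_of_hasDerivAt (fun t _ => hw' t) ?_
    exact (hucont.mul (hcch.pow 2)).intervalIntegrable _ _
  set H : ℝ → ℝ := fun x => ∫ t in (0:ℝ)..x, u t ^ 2 * Real.exp (k*t) with hH_def
  have hHcont : Continuous (fun t : ℝ => u t ^ 2 * Real.exp (k*t)) := (hucont.pow 2).mul hce1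
  have hHnonneg : ∀ x : ℝ, 0 ≤ x → 0 ≤ H x := by
    intro x hx
    rw [hH_def]
    apply intervalIntegral.integral_nonneg hx
    intro t _; positivity
  have hexpmul : ∀ t : ℝ, Real.exp (k*t/2) * Real.exp (-(k*t)/2) = 1 := by
    intro t
    rw [← Real.exp_add, show k*t/2 + -(k*t)/2 = 0 from by ring, Real.exp_zero]
  -- pointwise key bound
  have key : ∀ x : ℝ, 0 ≤ x →
      (z x - z 0 * (1 / Real.cosh (k*x)) ^ 2) ^ 2
        ≤ (16/(3*k)) * (Real.exp (-(k*x)) * H x) := by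
    intro x hx
    have hc0 : Real.cosh (k*(0:ℝ)) = 1 := by norm_num
    have hcx := Real.cosh_pos (k*x)
    have hrepr : z x - z 0 * (1 / Real.cosh (k*x)) ^ 2
        = (1 / Real.cosh (k*x)) ^ 2 * (w x - w 0) := by
      rw [hw_def]
      simp only [hc0]
      field_simp
    -- Cauchy-Schwarz on (0, x]
    have hCS : (w x - w 0) ^ 2 ≤ H x * ∫ t in (0:ℝ)..x, Real.cosh (k*t) ^ 4 * Real.exp (-(k*t)) := by
      rw [← hwint x]
      have hfg : ∀ t : ℝ, u t * Real.cosh (k*t) ^ 2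
          = (u t * Real.exp (k*t/2)) * (Real.cosh (k*t) ^ 2 * Real.exp (-(k*t)/2)) := by
        intro t
        have e : (u t * Real.exp (k*t/2)) * (Real.cosh (k*t) ^ 2 * Real.exp (-(k*t)/2))
            = (u t * Real.cosh (k*t) ^ 2) * (Real.exp (k*t/2) * Real.exp (-(k*t)/2)) := by ring
        rw [e, hexpmul, mul_one]
      have hint1 : IntegrableOn (fun t => (u t * Real.exp (k*t/2)) ^ 2) (Ioc 0 x) :=
        Continuous.integrableOn_Ioc ((hucont.mul hce2).pow 2)
      have hint2 : IntegrableOn (fun t => ((Real.cosh (k*t)) ^ 2 * Real.exp (-(k*t)/2)) ^ 2) (Ioc 0 x) :=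
        Continuous.integrableOn_Ioc (((hcch.pow 2).mul hce3).pow 2)
      have hint3 : IntegrableOn (fun t =>
          (u t * Real.exp (k*t/2)) * ((Real.cosh (k*t)) ^ 2 * Real.exp (-(k*t)/2))) (Ioc 0 x) :=
        Continuous.integrableOn_Ioc ((hucont.mul hce2).mul ((hcch.pow 2).mul hce3))
      have hcs := my_cs_integral (μ := volume.restrict (Ioc 0 x))
        (fun t => u t * Real.exp (k*t/2)) (fun t => Real.cosh (k*t) ^ 2 * Real.exp (-(k*t)/2))
        hint1 hint2 hint3
      have e1 : (∫ t in (0:ℝ)..x, u t * Real.cosh (k*t) ^ 2)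
          = ∫ t in Ioc 0 x, (u t * Real.exp (k*t/2)) * (Real.cosh (k*t) ^ 2 * Real.exp (-(k*t)/2)) := by
        rw [intervalIntegral.integral_of_le hx]
        exact setIntegral_congr_fun measurableSet_Ioc (fun t _ => hfg t)
      have e2 : H x = ∫ t in Ioc 0 x, (u t * Real.exp (k*t/2)) ^ 2 := by
        show (∫ t in (0:ℝ)..x, u t ^ 2 * Real.exp (k*t)) = _
        rw [intervalIntegral.integral_of_le hx]
        refine setIntegral_congr_fun measurableSet_Ioc (fun t _ => ?_)
        have e : (u t * Real.exp (k*t/2)) ^ 2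
            = u t ^ 2 * (Real.exp (k*t/2) * Real.exp (k*t/2)) := by ring
        rw [e, ← Real.exp_add, show k*t/2 + k*t/2 = k*t from by ring]
      have e3 : (∫ t in (0:ℝ)..x, Real.cosh (k*t) ^ 4 * Real.exp (-(k*t)))
          = ∫ t in Ioc 0 x, (Real.cosh (k*t) ^ 2 * Real.exp (-(k*t)/2)) ^ 2 := by
        rw [intervalIntegral.integral_of_le hx]
        refine setIntegral_congr_fun measurableSet_Ioc (fun t _ => ?_)
        have e : (Real.cosh (k*t) ^ 2 * Real.exp (-(k*t)/2)) ^ 2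
            = Real.cosh (k*t) ^ 4 * (Real.exp (-(k*t)/2) * Real.exp (-(k*t)/2)) := by ring
        rw [e, ← Real.exp_add, show -(k*t)/2 + -(k*t)/2 = -(k*t) from by ring]
      rw [e1, e2, e3]
      exact hcs
    -- bound the cosh integral
    have hcoshint : (∫ t in (0:ℝ)..x, Real.cosh (k*t) ^ 4 * Real.exp (-(k*t)))
        ≤ Real.exp (3*k*x) / (3*k) := by
      have hmono : (∫ t in (0:ℝ)..x, Real.cosh (k*t) ^ 4 * Real.exp (-(k*t)))
          ≤ ∫ t in (0:ℝ)..x, Real.exp (3*k*t) := by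
        apply intervalIntegral.integral_mono_on hx
          (((hcch.pow 4).mul hce4).intervalIntegrable _ _)
          (hce5.intervalIntegrable _ _)
        intro t ht
        have ht0 : 0 ≤ k*t := mul_nonneg hk.le ht.1
        have h1 : Real.cosh (k*t) ≤ Real.exp (k*t) := my_cosh_le_exp _ ht0
        have h2 : Real.cosh (k*t) ^ 4 ≤ Real.exp (k*t) ^ 4 :=
          pow_le_pow_left₀ (Real.cosh_pos _).le h1 4
        have h3 : Real.exp (k*t) ^ 4 = Real.exp (4*(k*t)) := by
          rw [← Real.exp_nat_mul]; norm_num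
        calc Real.cosh (k*t) ^ 4 * Real.exp (-(k*t))
            ≤ Real.exp (4*(k*t)) * Real.exp (-(k*t)) := by
              apply mul_le_mul_of_nonneg_right _ (Real.exp_pos _).le
              rw [← h3]; exact h2
          _ = Real.exp (3*k*t) := by rw [← Real.exp_add]; ring_nf
      have hval : (∫ t in (0:ℝ)..x, Real.exp (3*k*t)) = (Real.exp (3*k*x) - 1) / (3*k) := by
        have hanti : ∀ t : ℝ, HasDerivAt (fun s => Real.exp (3*k*s) / (3*k)) (Real.exp (3*k*t)) t := by
          intro t
          have h1 : HasDerivAt (fun s : ℝ => 3*k*s) (3*k) t := by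
            simpa using (hasDerivAt_id t).const_mul (3*k)
          have h2 := (Real.hasDerivAt_exp (3*k*t)).comp t h1
          have h3 := h2.div_const (3*k)
          refine h3.congr_deriv ?_
          field_simp
        rw [intervalIntegral.integral_eq_sub_of_hasDerivAt (fun t _ => hanti t)
          (hce5.intervalIntegrable _ _)]
        rw [mul_zero, Real.exp_zero]
        ring
      rw [hval] at hmono
      have h4 : (Real.exp (3*k*x) - 1) / (3*k) ≤ Real.exp (3*k*x) / (3*k) := by
        apply div_le_div_of_nonneg_right _ (by positivity)
        · linarith
      linarith
    -- sech bound
    have hsech : ((1 / Real.cosh (k*x)) ^ 2) ^ 2 ≤ 16 * Real.exp (-(4*(k*x))) := by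
      have h1 : 1 / Real.cosh (k*x) ≤ 2 * Real.exp (-|k*x|) := my_sech_le _
      have h1' : 1 / Real.cosh (k*x) ≤ 2 * Real.exp (-(k*x)) := by
        rwa [abs_of_nonneg (mul_nonneg hk.le hx)] at h1
      have h0 : (0:ℝ) ≤ 1 / Real.cosh (k*x) := by positivity
      have h2 : ((1 / Real.cosh (k*x)) ^ 2) ^ 2 = (1 / Real.cosh (k*x)) ^ 4 := by ring
      rw [h2]
      calc (1 / Real.cosh (k*x)) ^ 4 ≤ (2 * Real.exp (-(k*x))) ^ 4 :=
            pow_le_pow_left₀ h0 h1' 4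
        _ = 16 * Real.exp (-(k*x)) ^ 4 := by ring
        _ = 16 * Real.exp (-(4*(k*x))) := by
            rw [← Real.exp_nat_mul]; ring_nf
    -- combine
    have hHx := hHnonneg x hx
    rw [hrepr, mul_pow]
    calc ((1 / Real.cosh (k*x)) ^ 2) ^ 2 * (w x - w 0) ^ 2
        ≤ (16 * Real.exp (-(4*(k*x)))) * (H x * (Real.exp (3*k*x) / (3*k))) := by
          apply mul_le_mul hsech _ (sq_nonneg _) (by positivity)
          calc (w x - w 0) ^ 2
              ≤ H x * ∫ t in (0:ℝ)..x, Real.cosh (k*t) ^ 4 * Real.exp (-(k*t)) := hCS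
            _ ≤ H x * (Real.exp (3*k*x) / (3*k)) := mul_le_mul_of_nonneg_left hcoshint hHx
      _ = (16/(3*k)) * (Real.exp (-(k*x)) * H x) := by
          have e4 : Real.exp (-(4*(k*x))) * Real.exp (3*k*x) = Real.exp (-(k*x)) := by
            rw [← Real.exp_add]; congr 1; ring
          linear_combination (16 * H x / (3*k)) * e4
  -- derivative of H and of the potential function Φ
  have hH' : ∀ x : ℝ, HasDerivAt H (u x ^ 2 * Real.exp (k*x)) x := fun x =>
    intervalIntegral.integral_hasDerivAt_right (hHcont.intervalIntegrable _ _)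
      (hHcont.stronglyMeasurableAtFilter _ _) hHcont.continuousAt
  have hHc : Continuous H := by
    rw [continuous_iff_continuousAt]
    exact fun x => (hH' x).differentiableAt.continuousAt
  set G : ℝ → ℝ := fun x => ∫ t in (0:ℝ)..x, u t ^ 2 with hG_def
  have hG' : ∀ x : ℝ, HasDerivAt G (u x ^ 2) x := fun x =>
    intervalIntegral.integral_hasDerivAt_right ((hucont.pow 2).intervalIntegrable _ _)
      ((hucont.pow 2).stronglyMeasurableAtFilter _ _) (hucont.pow 2).continuousAt
  have hPhi : ∀ x : ℝ, HasDerivAt (fun y => -(1/k) * (Real.exp (-(k*y)) * H y) + (1/k) * G y)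
      (Real.exp (-(k*x)) * H x) x := by
    intro x
    have h1 : HasDerivAt (fun y : ℝ => -(k*y)) (-k) x := by
      exact (((hasDerivAt_id x).const_mul k).neg).congr_deriv (by simp)
    have he : HasDerivAt (fun y : ℝ => Real.exp (-(k*y))) (Real.exp (-(k*x)) * (-k)) x :=
      (Real.hasDerivAt_exp _).comp x h1
    have h2 := (he.mul (hH' x)).const_mul (-(1/k))
    have h3 := (hG' x).const_mul (1/k)
    have h4 := h2.add h3
    refine h4.congr_deriv ?_
    have hek : Real.exp (-(k*x)) * Real.exp (k*x) = 1 := by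
      rw [← Real.exp_add]; simp
    field_simp
    nlinarith [hek]
  have hPhiInt : ∀ R : ℝ, (∫ x in (0:ℝ)..R, Real.exp (-(k*x)) * H x)
      = -(1/k) * (Real.exp (-(k*R)) * H R) + (1/k) * G R := by
    intro R
    have h := intervalIntegral.integral_eq_sub_of_hasDerivAt (a := (0:ℝ)) (b := R)
      (fun x _ => hPhi x) ((hce4.mul hHc).intervalIntegrable _ _)
    rw [h]
    have hH0 : H 0 = 0 := intervalIntegral.integral_same
    have hG0 : G 0 = 0 := intervalIntegral.integral_same
    rw [hH0, hG0]
    ring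
  have hGle : ∀ R : ℝ, 0 ≤ R → G R ≤ ∫ t in Ioi (0:ℝ), u t ^ 2 := by
    intro R hR
    show (∫ t in (0:ℝ)..R, u t ^ 2) ≤ _
    rw [intervalIntegral.integral_of_le hR]
    refine setIntegral_mono_set hu (ae_of_all _ fun t => sq_nonneg _) ?_
    exact HasSubset.Subset.eventuallyLE Ioc_subset_Ioi_self
  have huI : (0:ℝ) ≤ ∫ t in Ioi (0:ℝ), u t ^ 2 :=
    setIntegral_nonneg measurableSet_Ioi fun t _ => sq_nonneg _
  -- the uniform bound over [0, R]
  have hbound : ∀ R : ℝ, 0 ≤ R →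
      (∫ x in (0:ℝ)..R, (z x - z 0 * (1 / Real.cosh (k*x)) ^ 2) ^ 2)
        ≤ (16/(3*k^2)) * ∫ t in Ioi (0:ℝ), u t ^ 2 := by
    intro R hR
    have hmono : (∫ x in (0:ℝ)..R, (z x - z 0 * (1 / Real.cosh (k*x)) ^ 2) ^ 2)
        ≤ ∫ x in (0:ℝ)..R, (16/(3*k)) * (Real.exp (-(k*x)) * H x) := by
      apply intervalIntegral.integral_mono_on hR
      · rw [intervalIntegrable_iff_integrableOn_Ioc_of_le hR]
        exact hin.mono_set Ioc_subset_Ioi_self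
      · exact ((continuous_const.mul (hce4.mul hHc)).intervalIntegrable _ _)
      · intro x hx
        exact key x hx.1
    rw [intervalIntegral.integral_const_mul, hPhiInt R] at hmono
    have hHR : 0 ≤ H R := hHnonneg R hR
    have h5 : -(1/k) * (Real.exp (-(k*R)) * H R) + (1/k) * G R
        ≤ (1/k) * ∫ t in Ioi (0:ℝ), u t ^ 2 := by
      have h6 : (0:ℝ) ≤ (1/k) * (Real.exp (-(k*R)) * H R) := by positivity
      have h7 := hGle R hR
      have h8 : (1/k) * G R ≤ (1/k) * ∫ t in Ioi (0:ℝ), u t ^ 2 :=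
        mul_le_mul_of_nonneg_left h7 (by positivity)
      linarith
    calc (∫ x in (0:ℝ)..R, (z x - z 0 * (1 / Real.cosh (k*x)) ^ 2) ^ 2)
        ≤ (16/(3*k)) * (-(1/k) * (Real.exp (-(k*R)) * H R) + (1/k) * G R) := hmono
      _ ≤ (16/(3*k)) * ((1/k) * ∫ t in Ioi (0:ℝ), u t ^ 2) :=
          mul_le_mul_of_nonneg_left h5 (by positivity)
      _ = (16/(3*k^2)) * ∫ t in Ioi (0:ℝ), u t ^ 2 := by
          rw [← mul_assoc]
          congr 1
          field_simp
  -- pass to the limit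
  have htend := intervalIntegral_tendsto_integral_Ioi 0 hin tendsto_id
  refine le_of_tendsto htend ?_
  filter_upwards [eventually_ge_atTop (0:ℝ)] with R hR
  exact hbound R hR

lemma my_integrableOn_neg {f : ℝ → ℝ} (hf : IntegrableOn f (Iic 0)) :
    IntegrableOn (fun x => f (-x)) (Ioi 0) := by
  have h1 : Integrable ((Iic (0:ℝ)).indicator f) := by
    rwa [integrable_indicator_iff measurableSet_Iic]
  have h2 := h1.comp_neg
  have heq : (fun t : ℝ => (Iic (0:ℝ)).indicator f (-t))
      = (Ici (0:ℝ)).indicator (fun x => f (-x)) := by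
    funext t
    by_cases ht : 0 ≤ t
    · rw [Set.indicator_of_mem (by simpa using ht), Set.indicator_of_mem (by simpa using ht)]
    · rw [Set.indicator_of_notMem (by simpa using ht),
        Set.indicator_of_notMem (by simpa using ht)]
  rw [heq, integrable_indicator_iff measurableSet_Ici] at h2
  exact h2.mono_set Ioi_subset_Ici_self

lemma my_ray_neg (k : ℝ) (hk : 0 < k) (z : ℝ → ℝ) (hz : ContDiff ℝ 1 z)
    (hin : IntegrableOn (fun x => (z x - z 0 * (1 / Real.cosh (k*x)) ^ 2) ^ 2) (Iic 0))
    (hu : IntegrableOn (fun x => (deriv z x + 2*k*Real.tanh (k*x) * z x) ^ 2) (Iic 0)) :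
    (∫ x in Iic 0, (z x - z 0 * (1 / Real.cosh (k*x)) ^ 2) ^ 2)
      ≤ (16/(3*k^2)) * ∫ x in Iic 0, (deriv z x + 2*k*Real.tanh (k*x) * z x) ^ 2 := by
  set zt : ℝ → ℝ := fun x => z (-x) with hzt_def
  have hztc : ContDiff ℝ 1 zt := hz.comp (contDiff_neg)
  have hdz : ∀ x : ℝ, deriv zt x = -(deriv z (-x)) := by
    intro x
    have h1 : HasDerivAt z (deriv z (-x)) (-x) := (hz.differentiable one_ne_zero (-x)).hasDerivAt
    have h2 : HasDerivAt (fun y : ℝ => -y) (-1 : ℝ) x := hasDerivAt_neg x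
    have h3 := h1.comp x h2
    have h4 : HasDerivAt zt (deriv z (-x) * (-1)) x := h3
    rw [h4.deriv]; ring
  have hcosh_even : ∀ x : ℝ, Real.cosh (k * (-x)) = Real.cosh (k*x) := by
    intro x; rw [show k * (-x) = -(k*x) from by ring, Real.cosh_neg]
  have htanh_odd : ∀ x : ℝ, Real.tanh (k * (-x)) = -Real.tanh (k*x) := by
    intro x; rw [show k * (-x) = -(k*x) from by ring, Real.tanh_neg]
  have hF : ∀ x : ℝ, (zt x - zt 0 * (1 / Real.cosh (k*x)) ^ 2) ^ 2
      = (z (-x) - z 0 * (1 / Real.cosh (k * (-x))) ^ 2) ^ 2 := by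
    intro x
    rw [hzt_def]
    simp only [neg_zero, hcosh_even]
  have hU : ∀ x : ℝ, (deriv zt x + 2*k*Real.tanh (k*x) * zt x) ^ 2
      = (deriv z (-x) + 2*k*Real.tanh (k * (-x)) * z (-x)) ^ 2 := by
    intro x
    rw [hdz x, htanh_odd x, hzt_def]
    ring
  have hin' : IntegrableOn (fun x => (zt x - zt 0 * (1 / Real.cosh (k*x)) ^ 2) ^ 2) (Ioi 0) := by
    have := my_integrableOn_neg hin
    refine this.congr_fun (fun x _ => ?_) measurableSet_Ioi
    exact (hF x).symm
  have hu' : IntegrableOn (fun x => (deriv zt x + 2*k*Real.tanh (k*x) * zt x) ^ 2) (Ioi 0) := by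
    have := my_integrableOn_neg hu
    refine this.congr_fun (fun x _ => ?_) measurableSet_Ioi
    exact (hU x).symm
  have hray := my_ray k hk zt hztc hin' hu'
  have e1 : (∫ x in Ioi (0:ℝ), (zt x - zt 0 * (1 / Real.cosh (k*x)) ^ 2) ^ 2)
      = ∫ x in Iic (0:ℝ), (z x - z 0 * (1 / Real.cosh (k*x)) ^ 2) ^ 2 := by
    have h := integral_comp_neg_Ioi (0:ℝ)
      (fun y => (z y - z 0 * (1 / Real.cosh (k*y)) ^ 2) ^ 2)
    rw [neg_zero] at h
    rw [← h]
    refine setIntegral_congr_fun measurableSet_Ioi (fun x _ => ?_)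
    rw [hF x]
  have e2 : (∫ x in Ioi (0:ℝ), (deriv zt x + 2*k*Real.tanh (k*x) * zt x) ^ 2)
      = ∫ x in Iic (0:ℝ), (deriv z x + 2*k*Real.tanh (k*x) * z x) ^ 2 := by
    have h := integral_comp_neg_Ioi (0:ℝ)
      (fun y => (deriv z y + 2*k*Real.tanh (k*y) * z y) ^ 2)
    rw [neg_zero] at h
    rw [← h]
    refine setIntegral_congr_fun measurableSet_Ioi (fun x _ => ?_)
    rw [hU x]
  rw [e1, e2] at hray
  exact hray

lemma my_hasDerivAt_kink (c : ℝ) (x : ℝ) :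
    HasDerivAt (kink c) ((Real.sqrt c * (Real.sqrt c / Real.sqrt 2))
      * (1 / Real.cosh ((Real.sqrt c / Real.sqrt 2) * x)) ^ 2) x := by
  have h1 : HasDerivAt (fun s : ℝ => Real.sqrt c * s / Real.sqrt 2) (Real.sqrt c / Real.sqrt 2) x := by
    have := ((hasDerivAt_id x).const_mul (Real.sqrt c)).div_const (Real.sqrt 2)
    simpa using this
  have h2 := (my_hasDerivAt_tanh (Real.sqrt c * x / Real.sqrt 2)).comp x h1
  have h3 := h2.const_mul (Real.sqrt c)
  have harg : Real.sqrt c * x / Real.sqrt 2 = (Real.sqrt c / Real.sqrt 2) * x := by ring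
  unfold kink
  refine h3.congr_deriv ?_
  rw [harg]
  ring

lemma my_deriv_kink (c : ℝ) (x : ℝ) :
    deriv (kink c) x = (Real.sqrt c * (Real.sqrt c / Real.sqrt 2))
      * (1 / Real.cosh ((Real.sqrt c / Real.sqrt 2) * x)) ^ 2 :=
  (my_hasDerivAt_kink c x).deriv

/-! ### The integration-by-parts identity -/

lemma my_ibp (k c : ℝ) (hk : 0 < k) (hck : c = 2*k^2) (z : ℝ → ℝ) (hz : ContDiff ℝ 1 z)
    (h2 : Integrable (fun x => z x ^ 2)) (h2' : Integrable (fun x => deriv z x ^ 2)) :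
    (∫ x, (deriv z x + 2*k*Real.tanh (k*x) * z x) ^ 2)
      = ∫ x, (deriv z x ^ 2 + 2*c*z x ^ 2 - 3*(c - c * Real.tanh (k*x) ^ 2) * z x ^ 2) := by
  have hzc : Continuous z := hz.continuous
  have hdc : Continuous (deriv z) := hz.continuous_deriv le_rfl
  have hlin : Continuous (fun t : ℝ => k * t) := continuous_const.mul continuous_id
  have hcta : Continuous (fun t : ℝ => Real.tanh (k*t)) := my_continuous_tanh.comp hlin
  set u : ℝ → ℝ := fun x => deriv z x + 2*k*Real.tanh (k*x) * z x with hu_def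
  set P : ℝ → ℝ := fun x => deriv z x ^ 2 + 2*c*z x ^ 2 - 3*(c - c * Real.tanh (k*x) ^ 2) * z x ^ 2
    with hP_def
  have hucont : Continuous u := hdc.add ((continuous_const.mul hcta).mul hzc)
  have hPcont : Continuous P := by
    apply Continuous.sub
    · exact (hdc.pow 2).add (continuous_const.mul (hzc.pow 2))
    · exact (continuous_const.mul ((continuous_const.sub (continuous_const.mul (hcta.pow 2))))).mul (hzc.pow 2)
  -- integrability
  have htb : ∀ x : ℝ, Real.tanh (k*x) ^ 2 ≤ 1 := by
    intro x
    have := my_abs_tanh_le_one (k*x)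
    nlinarith [abs_nonneg (Real.tanh (k*x)), sq_abs (Real.tanh (k*x))]
  have hu2 : Integrable (fun x => u x ^ 2) := by
    refine Integrable.mono' ((h2'.const_mul 2).add (h2.const_mul (8*k^2)))
      ((hucont.pow 2).aestronglyMeasurable) (ae_of_all _ fun x => ?_)
    rw [Real.norm_eq_abs, abs_of_nonneg (sq_nonneg _), hu_def]
    simp only [Pi.add_apply]
    have ht := htb x
    have h1 : (2*k*Real.tanh (k*x) * z x) ^ 2 ≤ 4*k^2 * z x ^ 2 := by nlinarith [sq_nonneg (z x), sq_nonneg (k * z x)]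
    nlinarith [sq_nonneg (deriv z x - 2*k*Real.tanh (k*x) * z x), sq_nonneg (deriv z x + 2*k*Real.tanh (k*x) * z x)]
  have hc0 : 0 < c := by nlinarith [sq_nonneg k]
  have hP : Integrable P := by
    have hlast : Integrable (fun x => 3*(c - c * Real.tanh (k*x) ^ 2) * z x ^ 2) := by
      refine Integrable.mono' (h2.const_mul (3*c))
        (((continuous_const.mul ((continuous_const.sub (continuous_const.mul (hcta.pow 2))))).mul (hzc.pow 2)).aestronglyMeasurable)
        (ae_of_all _ fun x => ?_)
      rw [Real.norm_eq_abs]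
      have ht := htb x
      have ht0 : 0 ≤ Real.tanh (k*x) ^ 2 := sq_nonneg _
      have h0 : 0 ≤ c - c * Real.tanh (k*x) ^ 2 := by nlinarith
      rw [abs_of_nonneg (by positivity)]
      nlinarith [sq_nonneg (z x), mul_nonneg (mul_nonneg hc0.le ht0) (sq_nonneg (z x))]
    exact (h2'.add (h2.const_mul (2*c))).sub hlast
  -- the boundary function v
  set v : ℝ → ℝ := fun x => 2*k*Real.tanh (k*x) * z x ^ 2 with hv_def
  have hkx : ∀ x : ℝ, HasDerivAt (fun y : ℝ => k * y) k x := by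
    intro x; simpa using (hasDerivAt_id x).const_mul k
  have hv' : ∀ x : ℝ, HasDerivAt v (u x ^ 2 - P x) x := by
    intro x
    have h1 : HasDerivAt (fun y => Real.tanh (k*y)) ((1 / Real.cosh (k*x)) ^ 2 * k) x :=
      (my_hasDerivAt_tanh (k*x)).comp x (hkx x)
    have h1' := h1.const_mul (2*k)
    have h2a : HasDerivAt (fun y => z y ^ 2) (2 * z x * deriv z x) x := by
      have h := ((hz.differentiable one_ne_zero x).hasDerivAt).pow 2
      exact h.congr_deriv (by rw [show (2:ℕ) - 1 = 1 from rfl, pow_one]; push_cast; ring)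
    have h3 := h1'.mul h2a
    refine h3.congr_deriv ?_
    rw [hu_def, hP_def]
    simp only []
    rw [← my_one_sub_tanh_sq (k*x), hck]
    ring
  have hDcont : Continuous (fun x => u x ^ 2 - P x) := (hucont.pow 2).sub hPcont
  have hDint : Integrable (fun x => u x ^ 2 - P x) := hu2.sub hP
  -- FTC on [-R, R] and limit
  have hFTC : ∀ R : ℝ, ∫ x in (-R)..R, (u x ^ 2 - P x) = v R - v (-R) := by
    intro R
    exact intervalIntegral.integral_eq_sub_of_hasDerivAt (fun x _ => hv' x)
      (hDcont.intervalIntegrable _ _)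
  have hsq := my_sq_tendsto_zero hz h2 h2'
  have hvbound : ∀ x : ℝ, ‖v x‖ ≤ 2*k * z x ^ 2 := by
    intro x
    rw [hv_def]
    simp only [Real.norm_eq_abs]
    rw [abs_mul, abs_mul, abs_mul]
    have := my_abs_tanh_le_one (k*x)
    have h2k : |(2:ℝ)| * |k| = 2*k := by
      rw [abs_of_nonneg (by norm_num : (0:ℝ) ≤ 2), abs_of_pos hk]
    rw [abs_of_nonneg (sq_nonneg (z x))]
    calc |2| * |k| * |Real.tanh (k*x)| * z x ^ 2 ≤ |2| * |k| * 1 * z x ^ 2 := by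
          apply mul_le_mul_of_nonneg_right _ (sq_nonneg _)
          apply mul_le_mul_of_nonneg_left this (by positivity)
      _ = 2*k*z x ^ 2 := by rw [h2k]; ring
  have hvtop : Tendsto v atTop (𝓝 0) := by
    apply squeeze_zero_norm hvbound
    have := hsq.1.const_mul (2*k)
    simpa using this
  have hvbot : Tendsto v atBot (𝓝 0) := by
    apply squeeze_zero_norm hvbound
    have := hsq.2.const_mul (2*k)
    simpa using this
  have hlim1 : Tendsto (fun R : ℝ => ∫ x in (-R)..R, (u x ^ 2 - P x)) atTop
      (𝓝 (∫ x, (u x ^ 2 - P x))) :=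
    intervalIntegral_tendsto_integral hDint tendsto_neg_atTop_atBot tendsto_id
  have hlim2 : Tendsto (fun R : ℝ => v R - v (-R)) atTop (𝓝 0) := by
    have h1 := hvtop.sub (hvbot.comp tendsto_neg_atTop_atBot)
    simpa using h1
  have hzero : (∫ x, (u x ^ 2 - P x)) = 0 := by
    have : Tendsto (fun R : ℝ => ∫ x in (-R)..R, (u x ^ 2 - P x)) atTop (𝓝 0) := by
      refine hlim2.congr fun R => ?_
      rw [← hFTC R]
    exact tendsto_nhds_unique hlim1 this
  have := integral_sub hu2 hP
  rw [hzero] at this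
  linarith [this]

theorem stmt15 (c : ℝ) (hc : 0 < c) :
    ∃ lam : ℝ, 0 < lam ∧
      ∀ z : ℝ → ℝ, ContDiff ℝ 1 z →
        MeasureTheory.Integrable (fun x => (z x) ^ 2) →
        MeasureTheory.Integrable (fun x => (deriv z x) ^ 2) →
        (∫ x : ℝ, z x * deriv (kink c) x) = 0 →
        (1 / 2) * (∫ x : ℝ, ((deriv z x) ^ 2 + 2 * c * (z x) ^ 2
            - 3 * (c - (kink c x) ^ 2) * (z x) ^ 2))
          ≥ lam * ∫ x : ℝ, ((deriv z x) ^ 2 + (z x) ^ 2) := by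
  refine ⟨min (3/140) (3*c/128), lt_min (by norm_num) (by positivity), ?_⟩
  intro z hz h2 h2' hortho
  set k : ℝ := Real.sqrt c / Real.sqrt 2 with hk_def
  have hk : 0 < k := div_pos (Real.sqrt_pos.2 hc) (Real.sqrt_pos.2 (by norm_num))
  have hck : c = 2 * k ^ 2 := by
    rw [hk_def, div_pow, Real.sq_sqrt hc.le, Real.sq_sqrt (by norm_num : (0:ℝ) ≤ 2)]
    field_simp
  have hzc : Continuous z := hz.continuous
  have hdc : Continuous (deriv z) := hz.continuous_deriv le_rfl
  have hlin : Continuous (fun t : ℝ => k * t) := continuous_const.mul continuous_id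
  have hcta : Continuous (fun t : ℝ => Real.tanh (k*t)) := my_continuous_tanh.comp hlin
  have hcch : Continuous (fun t : ℝ => Real.cosh (k*t)) := Real.continuous_cosh.comp hlin
  set ψ : ℝ → ℝ := fun x => (1 / Real.cosh (k*x)) ^ 2 with hψ_def
  have hψc : Continuous ψ :=
    (continuous_const.div hcch (fun x => (Real.cosh_pos _).ne')).pow 2
  have hkk : ∀ x, (kink c x) ^ 2 = c * Real.tanh (k*x) ^ 2 := by
    intro x
    unfold kink
    rw [mul_pow, Real.sq_sqrt hc.le]
    congr 2
    rw [hk_def]; ring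
  have htb : ∀ x : ℝ, Real.tanh (k*x) ^ 2 ≤ 1 := fun x => by
    nlinarith [my_abs_tanh_le_one (k*x), abs_nonneg (Real.tanh (k*x)), sq_abs (Real.tanh (k*x))]
  set u : ℝ → ℝ := fun x => deriv z x + 2*k*Real.tanh (k*x) * z x with hu_def
  have hucont : Continuous u := hdc.add ((continuous_const.mul hcta).mul hzc)
  have hu2 : Integrable (fun x => u x ^ 2) := by
    refine Integrable.mono' ((h2'.const_mul 2).add (h2.const_mul (8*k^2)))
      ((hucont.pow 2).aestronglyMeasurable) (ae_of_all _ fun x => ?_)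
    rw [Real.norm_eq_abs, abs_of_nonneg (sq_nonneg _), hu_def]
    simp only [Pi.add_apply]
    have ht := htb x
    nlinarith [sq_nonneg (deriv z x - 2*k*Real.tanh (k*x) * z x),
      sq_nonneg (deriv z x + 2*k*Real.tanh (k*x) * z x), sq_nonneg (z x), sq_nonneg (k * z x)]
  -- integrability of ψ² and z·ψ
  have hψb : ∀ x : ℝ, ψ x ^ 2 ≤ 16 * Real.exp (-(4*k*|x|)) := by
    intro x
    have h1 := my_sech_le (k*x)
    have h0 : (0:ℝ) ≤ 1 / Real.cosh (k*x) := by positivity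
    have h4 : ψ x ^ 2 = (1 / Real.cosh (k*x)) ^ 4 := by rw [hψ_def]; ring
    rw [h4]
    calc (1 / Real.cosh (k*x)) ^ 4 ≤ (2 * Real.exp (-|k*x|)) ^ 4 := pow_le_pow_left₀ h0 h1 4
      _ = 16 * (Real.exp (-|k*x|)) ^ 4 := by ring
      _ = 16 * Real.exp (-(4*k*|x|)) := by
          rw [← Real.exp_nat_mul]
          congr 1
          rw [abs_mul, abs_of_pos hk]
          push_cast
          ring
  have hψ2 : Integrable (fun x => ψ x ^ 2) := by
    refine Integrable.mono'
      ((my_integrable_exp_neg_abs (b := 4*k) (by positivity)).const_mul 16)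
      ((hψc.pow 2).aestronglyMeasurable) (ae_of_all _ fun x => ?_)
    rw [Real.norm_eq_abs, abs_of_nonneg (sq_nonneg _)]
    exact hψb x
  have hzψ : Integrable (fun x => z x * ψ x) := my_integrable_mul hzc hψc h2 hψ2
  -- orthogonality in terms of ψ
  have hdk : ∀ x, deriv (kink c) x = (Real.sqrt c * k) * ψ x := by
    intro x
    rw [my_deriv_kink c x, hψ_def, hk_def]
  have horth : (∫ x, z x * ψ x) = 0 := by
    have e1 : (∫ x, z x * deriv (kink c) x)
        = (Real.sqrt c * k) * ∫ x, z x * ψ x := by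
      rw [← integral_const_mul]
      congr 1
      funext x
      rw [hdk x]
      ring
    rw [e1] at hortho
    have hne : Real.sqrt c * k ≠ 0 := by positivity
    exact (mul_eq_zero.1 hortho).resolve_left hne
  -- expand: ∫ z² ≤ ∫ (z - z 0 · ψ)²
  have hdiffeq : (fun x => (z x - z 0 * ψ x) ^ 2)
      = fun x => (z x ^ 2 - (2 * z 0) * (z x * ψ x)) + (z 0) ^ 2 * ψ x ^ 2 := by
    funext x; ring
  have hdiff2 : Integrable (fun x => (z x - z 0 * ψ x) ^ 2) := by
    rw [hdiffeq]
    exact (h2.sub (hzψ.const_mul _)).add (hψ2.const_mul _)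
  have i0 : Integrable (fun x => 2 * z 0 * (z x * ψ x)) := hzψ.const_mul _
  have i1 : Integrable (fun x => z x ^ 2 - 2 * z 0 * (z x * ψ x)) := h2.sub i0
  have i2 : Integrable (fun x => (z 0) ^ 2 * ψ x ^ 2) := hψ2.const_mul _
  have hexpand : (∫ x, (z x - z 0 * ψ x) ^ 2)
      = (∫ x, z x ^ 2) + (z 0) ^ 2 * ∫ x, ψ x ^ 2 := by
    rw [hdiffeq, integral_add i1 i2, integral_sub h2 i0, integral_const_mul, integral_const_mul,
      horth]
    ring
  have hψ2nonneg : (0:ℝ) ≤ ∫ x, ψ x ^ 2 := integral_nonneg fun x => sq_nonneg _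
  have hzle : (∫ x, z x ^ 2) ≤ ∫ x, (z x - z 0 * ψ x) ^ 2 := by
    rw [hexpand]
    nlinarith [sq_nonneg (z 0)]
  -- the two rays
  have hray1 := my_ray k hk z hz (hdiff2.integrableOn) (hu2.integrableOn)
  have hray2 := my_ray_neg k hk z hz (hdiff2.integrableOn) (hu2.integrableOn)
  have hsplit1 : (∫ x, (z x - z 0 * ψ x) ^ 2)
      = (∫ x in Iic 0, (z x - z 0 * ψ x) ^ 2) + ∫ x in Ioi 0, (z x - z 0 * ψ x) ^ 2 :=
    (intervalIntegral.integral_Iic_add_Ioi hdiff2.integrableOn hdiff2.integrableOn).symm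
  have hsplit2 : (∫ x, u x ^ 2)
      = (∫ x in Iic 0, u x ^ 2) + ∫ x in Ioi 0, u x ^ 2 :=
    (intervalIntegral.integral_Iic_add_Ioi hu2.integrableOn hu2.integrableOn).symm
  have hpoincare : (∫ x, (z x - z 0 * ψ x) ^ 2) ≤ (16/(3*k^2)) * ∫ x, u x ^ 2 := by
    rw [hsplit1, hsplit2, mul_add]
    exact add_le_add hray2 hray1
  -- identify the quadratic form
  have hQP : (∫ x : ℝ, ((deriv z x) ^ 2 + 2 * c * (z x) ^ 2
        - 3 * (c - (kink c x) ^ 2) * (z x) ^ 2))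
      = ∫ x, (deriv z x ^ 2 + 2*c*z x ^ 2 - 3*(c - c * Real.tanh (k*x) ^ 2) * z x ^ 2) := by
    refine integral_congr_ae (ae_of_all _ fun x => ?_)
    simp only [hkk]
  have hibp := my_ibp k c hk hck z hz h2 h2'
  have hQu : (∫ x, u x ^ 2)
      = ∫ x : ℝ, ((deriv z x) ^ 2 + 2 * c * (z x) ^ 2
          - 3 * (c - (kink c x) ^ 2) * (z x) ^ 2) := by
    rw [hQP]
    exact hibp
  -- integrability of the integrand P
  have hP : Integrable (fun x => deriv z x ^ 2 + 2*c*z x ^ 2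
      - 3*(c - c * Real.tanh (k*x) ^ 2) * z x ^ 2) := by
    have hlast : Integrable (fun x => 3*(c - c * Real.tanh (k*x) ^ 2) * z x ^ 2) := by
      refine Integrable.mono' (h2.const_mul (3*c))
        (((continuous_const.mul ((continuous_const.sub (continuous_const.mul (hcta.pow 2))))).mul
          (hzc.pow 2)).aestronglyMeasurable)
        (ae_of_all _ fun x => ?_)
      rw [Real.norm_eq_abs]
      have ht := htb x
      have ht0 : 0 ≤ Real.tanh (k*x) ^ 2 := sq_nonneg _
      have h0 : 0 ≤ c - c * Real.tanh (k*x) ^ 2 := by nlinarith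
      rw [abs_of_nonneg (by positivity)]
      nlinarith [sq_nonneg (z x), mul_nonneg (mul_nonneg hc.le ht0) (sq_nonneg (z x))]
    exact (h2'.add (h2.const_mul (2*c))).sub hlast
  -- lower bound Q ≥ A - c B
  have hQab : (∫ x, deriv z x ^ 2) - c * (∫ x, z x ^ 2)
      ≤ ∫ x, (deriv z x ^ 2 + 2*c*z x ^ 2 - 3*(c - c * Real.tanh (k*x) ^ 2) * z x ^ 2) := by
    have hmono : (∫ x, (deriv z x ^ 2 - c * z x ^ 2))
        ≤ ∫ x, (deriv z x ^ 2 + 2*c*z x ^ 2 - 3*(c - c * Real.tanh (k*x) ^ 2) * z x ^ 2) := by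
      refine integral_mono (h2'.sub (h2.const_mul c)) hP fun x => ?_
      have ht := htb x
      nlinarith [mul_nonneg (mul_nonneg hc.le (sq_nonneg (Real.tanh (k*x)))) (sq_nonneg (z x))]
    rw [integral_sub h2' (h2.const_mul c), integral_const_mul] at hmono
    exact hmono
  -- final assembly
  set A : ℝ := ∫ x, deriv z x ^ 2 with hA_def
  set B : ℝ := ∫ x, z x ^ 2 with hB_def
  set Q : ℝ := ∫ x : ℝ, ((deriv z x) ^ 2 + 2 * c * (z x) ^ 2
      - 3 * (c - (kink c x) ^ 2) * (z x) ^ 2) with hQ_def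
  have hA : 0 ≤ A := integral_nonneg fun x => sq_nonneg _
  have hB : 0 ≤ B := integral_nonneg fun x => sq_nonneg _
  have hBQ : B ≤ (16/(3*k^2)) * Q := by
    calc B ≤ ∫ x, (z x - z 0 * ψ x) ^ 2 := hzle
      _ ≤ (16/(3*k^2)) * ∫ x, u x ^ 2 := hpoincare
      _ = (16/(3*k^2)) * Q := by rw [hQu]
  have hQab' : A - c * B ≤ Q := by
    rw [hQP]
    exact hQab
  have hQB : (3*c/32) * B ≤ Q := by
    have e : (3*c/32) * (16/(3*k^2)) = 1 := by
      rw [hck]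
      field_simp
      ring
    calc (3*c/32) * B ≤ (3*c/32) * ((16/(3*k^2)) * Q) :=
          mul_le_mul_of_nonneg_left hBQ (by positivity)
      _ = Q := by rw [← mul_assoc, e, one_mul]
  have h1l : min (3/140) (3*c/128) * A ≤ (3/140) * A :=
    mul_le_mul_of_nonneg_right (min_le_left _ _) hA
  have h2l : min (3/140) (3*c/128) * B ≤ (3*c/128) * B :=
    mul_le_mul_of_nonneg_right (min_le_right _ _) hB
  have hgoal : min (3/140) (3*c/128) * (A + B) ≤ (1/2) * Q := by
    linarith [hQab', hQB, h1l, h2l]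
  rw [ge_iff_le, integral_add h2' h2]
  exact hgoal
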